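/- A loop satisfying C14 has the left inverse property: if a loop satisfies x·(y·(y·z)) = (x·(y·y))·z for all x,y,z, then (e/x)·(x·y) = y for all x,y. -/
import Mathlib


/-- A loop: a set with multiplication, left division `ldiv` (written `\`),
right division `rdiv` (written `/`), and a two-sided identity `e`. -/
structure Loop (α : Type) where
  mul : α → α → α
  ldiv : α → α → α
  rdiv : α → α → α
  e : α
  mul_ldiv : ∀ a b, mul a (ldiv a b) = b
  rdiv_mul : ∀ a b, mul (rdiv b a) a = b
  ldiv_mul : ∀ a b, ldiv a (mul a b) = b
  mul_rdiv : ∀ a b, rdiv (mul b a) a = b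
  e_mul : ∀ a, mul e a = a
  mul_e : ∀ a, mul a e = a

theorem stmt_12 (α : Type) (L : Loop α) (h : ∀ x y z : α, L.mul x (L.mul y (L.mul y z)) = L.mul (L.mul x (L.mul y y)) z) :
    ∀ x y : α, L.mul (L.rdiv L.e x) (L.mul x y) = y := by
  intro x y
  set j := L.rdiv L.e x with hj
  set r := L.ldiv x L.e with hrdef
  have hr : L.mul x r = L.e := L.mul_ldiv x L.e
  have hjx : L.mul j x = L.e := L.rdiv_mul x L.e
  have h2 := h j x r
  rw [hr, L.mul_e, hjx] at h2
  -- h2 : L.e = L.mul (L.mul j (L.mul x x)) r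
  have hx : L.rdiv L.e r = x := by rw [← hr]; exact L.mul_rdiv r x
  have hjxx : L.mul j (L.mul x x) = x := by
    have h4 := L.mul_rdiv r (L.mul j (L.mul x x))
    rw [← h2, hx] at h4
    exact h4.symm
  have h3 := h j x (L.ldiv x y)
  rw [L.mul_ldiv, hjxx, L.mul_ldiv] at h3
  exact h3
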